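/- Let H be a Hilbert space and A, B, C : H → H bounded self-adjoint operators with A positive definite (⟨Av,v⟩ > 0 for all v ≠ 0) and C non-negative. Suppose k ∈ ℂ with Im k > 0 and v ∈ H satisfies Av − kBv − k²Cv = 0. Then v = 0. -/

import Mathlib

open scoped InnerProductSpace

/-- if `A, B, C` are bounded self-adjoint operators on a Hilbert
space, `A` positive definite, `C` non-negative, and `Av − kBv − k²Cv = 0` with
`Im k > 0`, then `v = 0`. -/
theorem quadratic_pencil_no_eigen_im_pos
    {H : Type*} [NormedAddCommGroup H] [InnerProductSpace ℂ H] [CompleteSpace H]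
    (A B C : H →L[ℂ] H)
    (hA : IsSelfAdjoint A) (hB : IsSelfAdjoint B) (hC : IsSelfAdjoint C)
    (hApos : ∀ v : H, v ≠ 0 → 0 < (⟪A v, v⟫_ℂ).re)
    (hCnonneg : ∀ v : H, 0 ≤ (⟪C v, v⟫_ℂ).re)
    (k : ℂ) (hk : 0 < k.im)
    (v : H) (hv : A v - k • B v - k ^ 2 • C v = 0) : v = 0 := by
  by_contra hne
  have hreal : ∀ (T : H →L[ℂ] H), IsSelfAdjoint T → (⟪T v, v⟫_ℂ).im = 0 := by
    intro T hT
    have h1 : ⟪T v, v⟫_ℂ = ⟪v, T v⟫_ℂ := by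
      conv_lhs => rw [← hT.adjoint_eq]
      rw [ContinuousLinearMap.adjoint_inner_left]
    have h2 : ⟪v, T v⟫_ℂ = (starRingEnd ℂ) ⟪T v, v⟫_ℂ := (inner_conj_symm _ _).symm
    have h3 := congrArg Complex.im (h1.trans h2)
    rw [Complex.conj_im] at h3
    linarith
  have ha := hApos v hne
  have hc := hCnonneg v
  have hbi := hreal B hB
  have hci := hreal C hC
  have hai := hreal A hA
  have heq : ⟪A v, v⟫_ℂ - (starRingEnd ℂ) k * ⟪B v, v⟫_ℂ
      - (starRingEnd ℂ) (k ^ 2) * ⟪C v, v⟫_ℂ = 0 := by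
    have h0 : ⟪A v - k • B v - k ^ 2 • C v, v⟫_ℂ = 0 := by rw [hv, inner_zero_left]
    rw [inner_sub_left, inner_sub_left, inner_smul_left, inner_smul_left] at h0
    exact h0
  have hre := congrArg Complex.re heq
  have him := congrArg Complex.im heq
  simp [Complex.sub_re, Complex.sub_im, Complex.mul_re, Complex.mul_im,
    Complex.conj_re, Complex.conj_im, pow_two, hai, hbi, hci] at hre him
  have hb : (⟪B v, v⟫_ℂ).re = -2 * k.re * (⟪C v, v⟫_ℂ).re := by
    have h4 : k.im * ((⟪B v, v⟫_ℂ).re + 2 * k.re * (⟪C v, v⟫_ℂ).re) = 0 := by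
      ring_nf
      ring_nf at him
      linarith
    rcases mul_eq_zero.mp h4 with h | h
    · exact absurd h (ne_of_gt hk)
    · linarith
  rw [hb] at hre
  nlinarith [mul_nonneg (sq_nonneg k.re) hc, mul_nonneg (sq_nonneg k.im) hc]
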